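/- Let α and β be finite nonempty index types and let ψ : α × β → ℂ be a unit vector (∑ |ψ(i,j)|² = 1). Let Φ be the rank-one projector Φ((i,j),(k,l)) = ψ(i,j) · conj(ψ(k,l)). Then the partial transpose Φ^{T_B} satisfies −(1/2)·1 ⪯ Φ^{T_B} ⪯ 1 in the Loewner order; that is, both matrices 1 − Φ^{T_B} and Φ^{T_B} + (1/2)·1 are positive semidefinite. -/

import Mathlib

open Matrix BigOperators ComplexOrder

/-- Partial transpose on the second tensor factor. -/
def ptB {α β : Type*} (M : Matrix (α × β) (α × β) ℂ) : Matrix (α × β) (α × β) ℂ :=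
  fun p q => M (p.1, q.2) (q.1, p.2)

lemma normSq_sum_mul_le {α : Type*} [Fintype α] (f g : α → ℂ) :
    Complex.normSq (∑ i, f i * g i) ≤ (∑ i, Complex.normSq (f i)) * (∑ i, Complex.normSq (g i)) := by
  have h1 : ‖∑ i, f i * g i‖ ≤ ∑ i, ‖f i‖ * ‖g i‖ := by
    refine le_trans (norm_sum_le (E := ℂ) Finset.univ (fun i => f i * g i)) ?_
    simp
  have h2 := Finset.sum_mul_sq_le_sq_mul_sq Finset.univ (fun i => ‖f i‖)
    (fun i => ‖g i‖)
  calc Complex.normSq (∑ i, f i * g i) = (‖∑ i, f i * g i‖)^2 := (Complex.sq_norm _).symm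
    _ ≤ (∑ i, ‖f i‖ * ‖g i‖)^2 := by
        exact pow_le_pow_left₀ (norm_nonneg _) h1 2
    _ ≤ (∑ i, (‖f i‖)^2) * (∑ i, (‖g i‖)^2) := h2
    _ = _ := by simp [Complex.sq_norm]

theorem stmt2 {α β : Type*} [Fintype α] [Fintype β] [DecidableEq α] [DecidableEq β]
    [Nonempty α] [Nonempty β]
    (ψ : α × β → ℂ) (hψ : ∑ p, Complex.normSq (ψ p) = 1)
    (Φ : Matrix (α × β) (α × β) ℂ)
    (hΦ : ∀ p q, Φ p q = ψ p * (starRingEnd ℂ) (ψ q)) :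
    (1 - ptB Φ).PosSemidef ∧ (ptB Φ + ((1 / 2 : ℝ) : ℂ) • 1).PosSemidef := by
  have hher : (ptB Φ).IsHermitian := by
    ext p q
    simp only [conjTranspose_apply, ptB, hΦ, star_mul', RCLike.star_def, starRingEnd_self_apply]
    ring
  -- main quadratic form estimates
  have key : ∀ v : α × β → ℂ, ∃ s : ℝ,
      star v ⬝ᵥ (ptB Φ *ᵥ v) = (s : ℂ) ∧
      s ≤ ∑ p, Complex.normSq (v p) ∧
      -(1/2) * (∑ p, Complex.normSq (v p)) ≤ s := by
    intro v
    set B : β → β → ℂ := fun j l => ∑ i, (starRingEnd ℂ) (v (i, j)) * ψ (i, l) with hBdef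
    have hB : ∀ j l, B j l = ∑ i, (starRingEnd ℂ) (v (i, j)) * ψ (i, l) := fun _ _ => rfl
    set C : ℝ := ∑ p, Complex.normSq (v p) with hC
    set b : ℝ := ∑ j, ∑ l, Complex.normSq (B j l) with hb'
    set p' : ℝ := ∑ j, ∑ l, Complex.normSq (B j l + B l j) with hp'
    set q' : ℝ := ∑ j, ∑ l, Complex.normSq (B j l - B l j) with hq'
    have hform : star v ⬝ᵥ (ptB Φ *ᵥ v) = ∑ j, ∑ l, B j l * (starRingEnd ℂ) (B l j) := by
      have lhs : star v ⬝ᵥ (ptB Φ *ᵥ v)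
          = ∑ i : α, ∑ j : β, ∑ k : α, ∑ l : β,
              (starRingEnd ℂ) (v (i, j)) * ψ (i, l) * (starRingEnd ℂ) (ψ (k, j)) * v (k, l) := by
        simp only [dotProduct, mulVec, Finset.mul_sum, ptB, hΦ, Fintype.sum_prod_type]
        refine Finset.sum_congr rfl fun i _ => Finset.sum_congr rfl fun j _ =>
          Finset.sum_congr rfl fun k _ => Finset.sum_congr rfl fun l _ => ?_
        simp [RCLike.star_def]
        ring
      have rhs : ∑ j, ∑ l, B j l * (starRingEnd ℂ) (B l j)
          = ∑ j : β, ∑ i : α, ∑ k : α, ∑ l : β,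
              (starRingEnd ℂ) (v (i, j)) * ψ (i, l) * (starRingEnd ℂ) (ψ (k, j)) * v (k, l) := by
        refine Finset.sum_congr rfl fun j _ => ?_
        rw [show (∑ i : α, ∑ k : α, ∑ l : β,
              (starRingEnd ℂ) (v (i, j)) * ψ (i, l) * (starRingEnd ℂ) (ψ (k, j)) * v (k, l))
            = ∑ i : α, ∑ l : β, ∑ k : α,
              (starRingEnd ℂ) (v (i, j)) * ψ (i, l) * (starRingEnd ℂ) (ψ (k, j)) * v (k, l)
          from Finset.sum_congr rfl fun i _ => Finset.sum_comm, Finset.sum_comm]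
        refine Finset.sum_congr rfl fun l _ => ?_
        simp only [hB, map_sum (starRingEnd ℂ), map_mul (starRingEnd ℂ), starRingEnd_self_apply,
          Finset.sum_mul, Finset.mul_sum]
        rw [Finset.sum_comm]
        refine Finset.sum_congr rfl fun i _ => Finset.sum_congr rfl fun k _ => ?_
        ring
      rw [lhs, rhs, Finset.sum_comm]
    have hpq : (p' : ℂ) - (q' : ℂ) = 4 * ∑ j, ∑ l, B j l * (starRingEnd ℂ) (B l j) := by
      have cast : ∀ f : β → β → ℂ, ((∑ j, ∑ l, Complex.normSq (f j l) : ℝ) : ℂ)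
          = ∑ j, ∑ l, f j l * (starRingEnd ℂ) (f j l) := by
        intro f
        rw [Complex.ofReal_sum]
        refine Finset.sum_congr rfl fun j _ => ?_
        rw [Complex.ofReal_sum]
        exact Finset.sum_congr rfl fun l _ => (Complex.mul_conj _).symm
      rw [hp', hq', cast, cast]
      have step : ∑ j, ∑ l, (B j l + B l j) * (starRingEnd ℂ) (B j l + B l j)
            - ∑ j, ∑ l, (B j l - B l j) * (starRingEnd ℂ) (B j l - B l j)
          = ∑ j, ∑ l, (2 * (B j l * (starRingEnd ℂ) (B l j))
            + 2 * (B l j * (starRingEnd ℂ) (B j l))) := by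
        rw [← Finset.sum_sub_distrib]
        refine Finset.sum_congr rfl fun j _ => ?_
        rw [← Finset.sum_sub_distrib]
        refine Finset.sum_congr rfl fun l _ => ?_
        simp only [map_add, map_sub]
        ring
      rw [step]
      simp only [Finset.sum_add_distrib]
      rw [show ∑ j, ∑ l, 2 * (B l j * (starRingEnd ℂ) (B j l))
          = ∑ j, ∑ l, 2 * (B j l * (starRingEnd ℂ) (B l j)) from Finset.sum_comm]
      simp only [← Finset.mul_sum]
      ring
    have hsum : p' + q' = 4 * b := by
      have step : p' + q' = ∑ j, ∑ l, (2 * Complex.normSq (B j l) + 2 * Complex.normSq (B l j)) := by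
        rw [hp', hq', ← Finset.sum_add_distrib]
        refine Finset.sum_congr rfl fun j _ => ?_
        rw [← Finset.sum_add_distrib]
        refine Finset.sum_congr rfl fun l _ => ?_
        rw [Complex.normSq_add, Complex.normSq_sub]
        ring
      rw [step]
      simp only [Finset.sum_add_distrib]
      rw [show ∑ j, ∑ l, 2 * Complex.normSq (B l j)
          = ∑ j, ∑ l, 2 * Complex.normSq (B j l) from Finset.sum_comm]
      simp only [← Finset.mul_sum]
      rw [hb']
      ring
    have hbC : b ≤ C := by
      have hBle : ∀ j l, Complex.normSq (B j l)
          ≤ (∑ i, Complex.normSq (v (i, j))) * (∑ i, Complex.normSq (ψ (i, l))) := fun j l => by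
        simpa [Complex.normSq_conj] using
          normSq_sum_mul_le (fun i => (starRingEnd ℂ) (v (i, j))) (fun i => ψ (i, l))
      calc b ≤ ∑ j, ∑ l, (∑ i, Complex.normSq (v (i, j))) * (∑ i, Complex.normSq (ψ (i, l))) :=
            Finset.sum_le_sum fun j _ => Finset.sum_le_sum fun l _ => hBle j l
        _ = (∑ j, ∑ i, Complex.normSq (v (i, j))) * (∑ l, ∑ i, Complex.normSq (ψ (i, l))) := by
            rw [Finset.sum_mul_sum]
        _ = C * 1 := by
            rw [show (∑ j, ∑ i, Complex.normSq (v (i, j))) = C by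
              rw [hC, Fintype.sum_prod_type]; exact Finset.sum_comm]
            rw [show (∑ l, ∑ i, Complex.normSq (ψ (i, l))) = 1 by
              rw [← hψ, Fintype.sum_prod_type]; exact Finset.sum_comm]
        _ = C := mul_one C
    have hqC : q' ≤ 2 * C := by
      set c : α → ℝ := fun i => ∑ j, Complex.normSq (v (i, j)) with hc
      set d : α → ℝ := fun i => ∑ j, Complex.normSq (ψ (i, j)) with hd
      have hc0 : ∀ i, 0 ≤ c i := fun i => Finset.sum_nonneg fun _ _ => Complex.normSq_nonneg _
      have hd0 : ∀ i, 0 ≤ d i := fun i => Finset.sum_nonneg fun _ _ => Complex.normSq_nonneg _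
      set W : α → EuclideanSpace ℂ (β × β) := fun i =>
        WithLp.toLp 2 fun jl : β × β => (starRingEnd ℂ) (v (i, jl.1)) * ψ (i, jl.2)
          - (starRingEnd ℂ) (v (i, jl.2)) * ψ (i, jl.1) with hW
      have hsumW : ∀ j l, B j l - B l j = (∑ i, W i) (j, l) := by
        intro j l
        rw [WithLp.ofLp_sum, Finset.sum_apply, hB, hB, ← Finset.sum_sub_distrib]
      have hC0 : 0 ≤ C := Finset.sum_nonneg fun _ _ => Complex.normSq_nonneg _
      have hq'eq : q' = ‖∑ i, W i‖ ^ 2 := by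
        rw [EuclideanSpace.norm_eq, Real.sq_sqrt (Finset.sum_nonneg fun _ _ => sq_nonneg _)]
        rw [hq', Fintype.sum_prod_type]
        refine Finset.sum_congr rfl fun j _ => Finset.sum_congr rfl fun l _ => ?_
        rw [hsumW j l, ← Complex.sq_norm]
      have hWnorm : ∀ i, ‖W i‖ ≤ Real.sqrt 2 * (Real.sqrt (c i) * Real.sqrt (d i)) := by
        intro i
        have key0 : ∀ j l : β, Complex.normSq (W i (j, l))
            = Complex.normSq (v (i, j)) * Complex.normSq (ψ (i, l))
              + Complex.normSq (v (i, l)) * Complex.normSq (ψ (i, j))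
              - 2 * ((((starRingEnd ℂ) (v (i, j)) * ψ (i, l))
                * (starRingEnd ℂ) ((starRingEnd ℂ) (v (i, l)) * ψ (i, j)))).re := by
          intro j l
          show Complex.normSq ((starRingEnd ℂ) (v (i, j)) * ψ (i, l)
            - (starRingEnd ℂ) (v (i, l)) * ψ (i, j)) = _
          rw [Complex.normSq_sub]
          simp only [Complex.normSq_mul, Complex.normSq_conj]
        have e1 : ∑ j : β, ∑ l : β, Complex.normSq (v (i, j)) * Complex.normSq (ψ (i, l))
            = c i * d i := (Finset.sum_mul_sum _ _ _ _).symm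
        have e2 : ∑ j : β, ∑ l : β, Complex.normSq (v (i, l)) * Complex.normSq (ψ (i, j))
            = c i * d i := by
          rw [Finset.sum_comm]
          exact (Finset.sum_mul_sum _ _ _ _).symm
        have e3 : ∑ j : β, ∑ l : β, (((starRingEnd ℂ) (v (i, j)) * ψ (i, l))
              * (starRingEnd ℂ) ((starRingEnd ℂ) (v (i, l)) * ψ (i, j)))
            = (starRingEnd ℂ) (∑ j, v (i, j) * ψ (i, j)) * (∑ j, v (i, j) * ψ (i, j)) := by
          rw [map_sum, Finset.sum_mul_sum]
          refine Finset.sum_congr rfl fun j _ => Finset.sum_congr rfl fun l _ => ?_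
          simp only [_root_.map_mul, starRingEnd_self_apply]
          ring
        have e3' : ∑ j : β, ∑ l : β, ((((starRingEnd ℂ) (v (i, j)) * ψ (i, l))
              * (starRingEnd ℂ) ((starRingEnd ℂ) (v (i, l)) * ψ (i, j)))).re
            = Complex.normSq (∑ j, v (i, j) * ψ (i, j)) := by
          rw [show (∑ j : β, ∑ l : β, ((((starRingEnd ℂ) (v (i, j)) * ψ (i, l))
              * (starRingEnd ℂ) ((starRingEnd ℂ) (v (i, l)) * ψ (i, j)))).re)
            = (∑ j : β, ∑ l : β, (((starRingEnd ℂ) (v (i, j)) * ψ (i, l))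
              * (starRingEnd ℂ) ((starRingEnd ℂ) (v (i, l)) * ψ (i, j)))).re from by
              rw [Complex.re_sum]
              exact Finset.sum_congr rfl fun j _ => (Complex.re_sum _ _).symm]
          rw [e3, mul_comm, Complex.mul_conj, Complex.ofReal_re]
        have expand : ∑ jl : β × β, Complex.normSq (W i jl)
            = 2 * (c i * d i) - 2 * Complex.normSq (∑ j, v (i, j) * ψ (i, j)) := by
          rw [Fintype.sum_prod_type]
          simp only [key0]
          simp only [Finset.sum_sub_distrib, Finset.sum_add_distrib]
          rw [e1, e2, show (∑ j : β, ∑ l : β, 2 * ((((starRingEnd ℂ) (v (i, j)) * ψ (i, l))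
                * (starRingEnd ℂ) ((starRingEnd ℂ) (v (i, l)) * ψ (i, j)))).re)
              = 2 * Complex.normSq (∑ j, v (i, j) * ψ (i, j)) from by
            simp only [← Finset.mul_sum]
            rw [e3']]
          ring
        have hnorm2 : ‖W i‖ = Real.sqrt (∑ jl : β × β, Complex.normSq (W i jl)) := by
          rw [EuclideanSpace.norm_eq]
          congr 1
          exact Finset.sum_congr rfl fun jl _ => by
            rw [Complex.sq_norm]
        rw [hnorm2, expand]
        calc Real.sqrt (2 * (c i * d i) - 2 * Complex.normSq (∑ j, v (i, j) * ψ (i, j)))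
            ≤ Real.sqrt (2 * (c i * d i)) := by
              refine Real.sqrt_le_sqrt ?_
              have := Complex.normSq_nonneg (∑ j, v (i, j) * ψ (i, j))
              linarith
          _ = Real.sqrt 2 * (Real.sqrt (c i) * Real.sqrt (d i)) := by
              rw [Real.sqrt_mul (by norm_num : (0:ℝ) ≤ 2), Real.sqrt_mul (hc0 i)]
      have hnorm_sum : ‖∑ i, W i‖ ≤ Real.sqrt 2 * (Real.sqrt C * Real.sqrt 1) := by
        calc ‖∑ i, W i‖ ≤ ∑ i, ‖W i‖ := norm_sum_le _ _
          _ ≤ ∑ i, Real.sqrt 2 * (Real.sqrt (c i) * Real.sqrt (d i)) :=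
              Finset.sum_le_sum fun i _ => hWnorm i
          _ = Real.sqrt 2 * ∑ i, Real.sqrt (c i) * Real.sqrt (d i) := by rw [Finset.mul_sum]
          _ ≤ Real.sqrt 2 * (Real.sqrt (∑ i, c i) * Real.sqrt (∑ i, d i)) :=
              mul_le_mul_of_nonneg_left
                (Real.sum_sqrt_mul_sqrt_le _ hc0 hd0) (Real.sqrt_nonneg 2)
          _ = Real.sqrt 2 * (Real.sqrt C * Real.sqrt 1) := by
              rw [show ∑ i, c i = C from by
                  rw [hC, Fintype.sum_prod_type],
                show ∑ i, d i = 1 from by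
                  rw [← hψ, Fintype.sum_prod_type]]
      rw [hq'eq]
      calc ‖∑ i, W i‖ ^ 2 ≤ (Real.sqrt 2 * (Real.sqrt C * Real.sqrt 1)) ^ 2 :=
            pow_le_pow_left₀ (norm_nonneg _) hnorm_sum 2
        _ = 2 * C := by
            rw [Real.sqrt_one, mul_one, mul_pow,
              Real.sq_sqrt (by norm_num : (0:ℝ) ≤ 2), Real.sq_sqrt hC0]
    have hq0 : 0 ≤ q' := Finset.sum_nonneg fun _ _ => Finset.sum_nonneg fun _ _ =>
      Complex.normSq_nonneg _
    have hp0 : 0 ≤ p' := Finset.sum_nonneg fun _ _ => Finset.sum_nonneg fun _ _ =>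
      Complex.normSq_nonneg _
    refine ⟨(p' - q') / 4, ?_, ?_, ?_⟩
    · rw [hform]
      have h4 : (∑ j, ∑ l, B j l * (starRingEnd ℂ) (B l j)) = ((p' : ℂ) - (q' : ℂ)) / 4 := by
        linear_combination (-1/4 : ℂ) * hpq
      rw [h4]
      push_cast
      ring
    · nlinarith [hq0, hbC, hsum]
    · nlinarith [hp0, hqC]
  constructor
  · refine Matrix.posSemidef_iff_dotProduct_mulVec.mpr ⟨Matrix.IsHermitian.sub Matrix.isHermitian_one hher, fun v => ?_⟩
    obtain ⟨s, hs, hsC, _⟩ := key v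
    rw [Matrix.sub_mulVec, Matrix.one_mulVec, dotProduct_sub, hs]
    have hvv : star v ⬝ᵥ v = ((∑ p, Complex.normSq (v p) : ℝ) : ℂ) := by
      rw [Complex.ofReal_sum]
      exact Finset.sum_congr rfl fun p _ => by
        simp only [dotProduct, Pi.star_apply, RCLike.star_def]
        rw [mul_comm, Complex.mul_conj]
    rw [hvv]
    rw [← Complex.ofReal_sub]
    rw [Complex.zero_le_real]
    linarith
  · refine Matrix.posSemidef_iff_dotProduct_mulVec.mpr ⟨Matrix.IsHermitian.add hher ?_, fun v => ?_⟩
    · ext p q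
      simp only [Matrix.conjTranspose_apply, Matrix.smul_apply, Matrix.one_apply]
      rcases eq_or_ne p q with h | h
      · simp [h, Complex.conj_ofReal]
      · simp [h, h.symm]
    · obtain ⟨s, hs, _, hslo⟩ := key v
      rw [Matrix.add_mulVec, dotProduct_add, hs, Matrix.smul_mulVec, Matrix.one_mulVec,
        dotProduct_smul]
      have hvv : star v ⬝ᵥ v = ((∑ p, Complex.normSq (v p) : ℝ) : ℂ) := by
        rw [Complex.ofReal_sum]
        exact Finset.sum_congr rfl fun p _ => by
          simp only [dotProduct, Pi.star_apply, RCLike.star_def]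
          rw [mul_comm, Complex.mul_conj]
      rw [hvv]
      have : (s : ℂ) + ((1 / 2 : ℝ) : ℂ) • ((∑ p, Complex.normSq (v p) : ℝ) : ℂ)
          = ((s + (1/2) * ∑ p, Complex.normSq (v p) : ℝ) : ℂ) := by
        rw [smul_eq_mul]
        push_cast
        ring
      rw [this, Complex.zero_le_real]
      linarith
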